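/- arXiv:2501.09110 — 2 statements merged into one kernel-verified Lean document; each statement's English description precedes it below -/
import Mathlib

section
/- In the integral group ring Z[A_5], the element u = 49 + 26·C₁ − 10·C₂ − 16·C₄ is a central unit, where C₁ is the sum of all elements conjugate to (1 2 3 4 5), C₂ is the sum of all elements conjugate to (1 3 5 2 4), and C₄ is the sum of all products of two disjoint transpositions. -/
open scoped Classical

/-- The alternating group on 5 letters. -/
abbrev A5 : Type := ↥(alternatingGroup (Fin 5))

/-- A fixed 5-cycle `(0 1 2 3 4)` in `A₅`. -/
noncomputable def sigma : A5 :=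
  ⟨finRotate 5, by
    rw [Equiv.Perm.mem_alternatingGroup]
    show Equiv.Perm.sign (finRotate (4 + 1)) = 1
    rw [sign_finRotate]; decide⟩

/-- A fixed product of two disjoint transpositions `(0 1)(2 3)` in `A₅`. -/
noncomputable def tau : A5 :=
  ⟨Equiv.swap 0 1 * Equiv.swap 2 3, by
    rw [Equiv.Perm.mem_alternatingGroup, map_mul,
      Equiv.Perm.sign_swap (by decide), Equiv.Perm.sign_swap (by decide)]
    decide⟩

/-- The sum, in `ℤ[A₅]`, of all elements of `A₅` conjugate to `x`. -/
noncomputable def classSum (x : A5) : MonoidAlgebra ℤ A5 :=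
  ∑ g : A5, if IsConj x g then MonoidAlgebra.of ℤ A5 g else 0

def P1 : Finset (Equiv.Perm (Fin 5)) := {(([0, 1, 2, 3, 4] : List (Fin 5)).formPerm), (([0, 1, 3, 4, 2] : List (Fin 5)).formPerm), (([0, 1, 4, 2, 3] : List (Fin 5)).formPerm), (([0, 2, 4, 3, 1] : List (Fin 5)).formPerm), (([0, 2, 1, 4, 3] : List (Fin 5)).formPerm), (([0, 2, 3, 1, 4] : List (Fin 5)).formPerm), (([0, 3, 2, 4, 1] : List (Fin 5)).formPerm), (([0, 3, 4, 1, 2] : List (Fin 5)).formPerm), (([0, 3, 1, 2, 4] : List (Fin 5)).formPerm), (([0, 4, 3, 2, 1] : List (Fin 5)).formPerm), (([0, 4, 1, 3, 2] : List (Fin 5)).formPerm), (([0, 4, 2, 1, 3] : List (Fin 5)).formPerm)}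

def P2 : Finset (Equiv.Perm (Fin 5)) := {(([0, 1, 2, 4, 3] : List (Fin 5)).formPerm), (([0, 1, 3, 2, 4] : List (Fin 5)).formPerm), (([0, 1, 4, 3, 2] : List (Fin 5)).formPerm), (([0, 2, 3, 4, 1] : List (Fin 5)).formPerm), (([0, 2, 1, 3, 4] : List (Fin 5)).formPerm), (([0, 2, 4, 1, 3] : List (Fin 5)).formPerm), (([0, 3, 4, 2, 1] : List (Fin 5)).formPerm), (([0, 3, 1, 4, 2] : List (Fin 5)).formPerm), (([0, 3, 2, 1, 4] : List (Fin 5)).formPerm), (([0, 4, 2, 3, 1] : List (Fin 5)).formPerm), (([0, 4, 3, 1, 2] : List (Fin 5)).formPerm), (([0, 4, 1, 2, 3] : List (Fin 5)).formPerm)}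

def P4 : Finset (Equiv.Perm (Fin 5)) := {(Equiv.swap (1:Fin 5) 2 * Equiv.swap 3 4), (Equiv.swap (1:Fin 5) 3 * Equiv.swap 2 4), (Equiv.swap (1:Fin 5) 4 * Equiv.swap 2 3), (Equiv.swap (0:Fin 5) 1 * Equiv.swap 3 4), (Equiv.swap (0:Fin 5) 1 * Equiv.swap 2 3), (Equiv.swap (0:Fin 5) 1 * Equiv.swap 2 4), (Equiv.swap (0:Fin 5) 2 * Equiv.swap 3 4), (Equiv.swap (0:Fin 5) 2 * Equiv.swap 1 3), (Equiv.swap (0:Fin 5) 2 * Equiv.swap 1 4), (Equiv.swap (0:Fin 5) 3 * Equiv.swap 2 4), (Equiv.swap (0:Fin 5) 3 * Equiv.swap 1 2), (Equiv.swap (0:Fin 5) 3 * Equiv.swap 1 4), (Equiv.swap (0:Fin 5) 4 * Equiv.swap 2 3), (Equiv.swap (0:Fin 5) 4 * Equiv.swap 1 2), (Equiv.swap (0:Fin 5) 4 * Equiv.swap 1 3)}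

def Utab : Nat → ℤ
  | 38 => 49
  | 59 => -16
  | 96 => -16
  | 117 => -16
  | 139 => -16
  | 142 => -16
  | 148 => -16
  | 194 => 26
  | 195 => -10
  | 204 => 26
  | 222 => -10
  | 227 => -10
  | 240 => 26
  | 269 => -10
  | 271 => 26
  | 279 => -16
  | 326 => -16
  | 334 => -10
  | 345 => -10
  | 353 => -16
  | 355 => 26
  | 366 => 26
  | 384 => -10
  | 397 => 26
  | 420 => -16
  | 429 => 26
  | 430 => -16
  | 446 => 26
  | 476 => -10
  | 482 => -10
  | 485 => -16
  | 507 => 26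
  | 516 => -10
  | 542 => -16
  | 551 => -10
  | 558 => -16
  | 565 => -10
  | 577 => 26
  | 580 => 26
  | 586 => -16
  | _ => 0

def Vtab : Nat → ℤ
  | 38 => 49
  | 59 => -16
  | 96 => -16
  | 117 => -16
  | 139 => -16
  | 142 => -16
  | 148 => -16
  | 194 => -10
  | 195 => 26
  | 204 => -10
  | 222 => 26
  | 227 => 26
  | 240 => -10
  | 269 => 26
  | 271 => -10
  | 279 => -16
  | 326 => -16
  | 334 => 26
  | 345 => 26
  | 353 => -16
  | 355 => -10
  | 366 => -10
  | 384 => 26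
  | 397 => -10
  | 420 => -16
  | 429 => -10
  | 430 => -16
  | 446 => -10
  | 476 => 26
  | 482 => 26
  | 485 => -16
  | 507 => -10
  | 516 => 26
  | 542 => -16
  | 551 => 26
  | 558 => -16
  | 565 => 26
  | 577 => -10
  | 580 => -10
  | 586 => -16
  | _ => 0

def cl (x : A5) : Finset A5 := Finset.univ.image fun c => c * x * c⁻¹

def W (p : Equiv.Perm (Fin 5)) : ℤ := Utab ((p 0).val*125+(p 1).val*25+(p 2).val*5+(p 3).val)
def W' (p : Equiv.Perm (Fin 5)) : ℤ := Vtab ((p 0).val*125+(p 1).val*25+(p 2).val*5+(p 3).val)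

lemma mem_cl {x a : A5} : a ∈ cl x ↔ IsConj x a := by
  simp [cl, isConj_iff]

lemma classSum_apply (x : A5) (a : A5) :
    (classSum x).coeff a = if a ∈ cl x then (1:ℤ) else 0 := by
  classical
  rw [classSum, MonoidAlgebra.coeff_sum, Finset.sum_apply']
  have h : ∀ g ∈ Finset.univ, (if IsConj x g then MonoidAlgebra.of ℤ A5 g else 0).coeff a
      = if g = a then (if a ∈ cl x then (1:ℤ) else 0) else 0 := by
    intro g _
    by_cases h1 : g = a
    · subst h1
      by_cases h2 : IsConj x g
      · rw [if_pos h2, if_pos (mem_cl.2 h2), if_pos rfl, MonoidAlgebra.of_apply, MonoidAlgebra.coeff_single,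
          Finsupp.single_eq_same]
      · rw [if_neg h2, if_neg (fun hh => h2 (mem_cl.1 hh)), if_pos rfl]
        rfl
    · by_cases h2 : IsConj x g
      · rw [if_pos h2, if_neg h1, MonoidAlgebra.of_apply, MonoidAlgebra.coeff_single, Finsupp.single_apply, if_neg h1]
      · rw [if_neg h2, if_neg h1]
        rfl
  rw [Finset.sum_congr rfl h, Finset.sum_ite_eq' Finset.univ a
    (fun _ => if a ∈ cl x then (1:ℤ) else 0), if_pos (Finset.mem_univ a)]

lemma numeral_eq_single (n : ℕ) [n.AtLeastTwo] :
    (OfNat.ofNat n : MonoidAlgebra ℤ A5) = MonoidAlgebra.single (1:A5) (OfNat.ofNat n : ℤ) := by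
  rw [← map_ofNat (algebraMap ℤ (MonoidAlgebra ℤ A5)) n, MonoidAlgebra.coe_algebraMap]
  simp

lemma uexp_apply (C₁ C₂ C₄ : A5) (a : A5) :
    ((49 : MonoidAlgebra ℤ A5) + 26 * classSum C₁ - 10 * classSum C₂ - 16 * classSum C₄).coeff a
      = (if (1:A5) = a then (49:ℤ) else 0) + 26 * (if a ∈ cl C₁ then 1 else 0)
        - 10 * (if a ∈ cl C₂ then 1 else 0) - 16 * (if a ∈ cl C₄ then 1 else 0) := by
  rw [MonoidAlgebra.coeff_sub, MonoidAlgebra.coeff_sub, MonoidAlgebra.coeff_add,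
    Finsupp.sub_apply, Finsupp.sub_apply, Finsupp.add_apply,
    numeral_eq_single 49, numeral_eq_single 26, numeral_eq_single 10, numeral_eq_single 16,
    MonoidAlgebra.single_one_mul_apply, MonoidAlgebra.single_one_mul_apply,
    MonoidAlgebra.single_one_mul_apply, MonoidAlgebra.coeff_single, Finsupp.single_apply,
    classSum_apply, classSum_apply, classSum_apply]

lemma isConj_mul_comm (a b : A5) : IsConj (a * b) (b * a) :=
  isConj_iff.2 ⟨b, by group⟩

lemma one_eq_mul_comm (a b : A5) : ((1:A5) = a * b) = ((1:A5) = b * a) := by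
  apply propext
  constructor <;> intro h
  · have : a = b⁻¹ := mul_eq_one_iff_eq_inv.1 h.symm
    subst this; simp
  · have : b = a⁻¹ := mul_eq_one_iff_eq_inv.1 h.symm
    subst this; simp

lemma cl_mul_comm (x a b : A5) : (a * b ∈ cl x) = (b * a ∈ cl x) := by
  rw [mem_cl, mem_cl]
  exact propext ⟨fun h => h.trans (isConj_mul_comm a b),
    fun h => h.trans (isConj_mul_comm b a)⟩

lemma central_of_classfun (z : MonoidAlgebra ℤ A5)
    (h : ∀ a b : A5, z.coeff (a * b) = z.coeff (b * a)) :
    z ∈ Subring.center (MonoidAlgebra ℤ A5) := by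
  rw [Subring.mem_center_iff]
  intro g
  ext x
  rw [MonoidAlgebra.mul_apply_left, MonoidAlgebra.mul_apply_right]
  apply Finsupp.sum_congr
  intro a _
  rw [mul_comm]
  congr 1
  exact h a⁻¹ x

lemma uexp_central (C₁ C₂ C₄ : A5) :
    ((49 : MonoidAlgebra ℤ A5) + 26 * classSum C₁ - 10 * classSum C₂ - 16 * classSum C₄)
      ∈ Subring.center (MonoidAlgebra ℤ A5) := by
  apply central_of_classfun
  intro a b
  rw [uexp_apply, uexp_apply]
  simp only [one_eq_mul_comm a b, cl_mul_comm C₁ a b, cl_mul_comm C₂ a b, cl_mul_comm C₄ a b]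

set_option maxRecDepth 1000000 in
set_option maxHeartbeats 4000000 in
lemma imgP1 : (cl sigma).image Subtype.val = P1 := by decide

set_option maxRecDepth 1000000 in
set_option maxHeartbeats 4000000 in
lemma imgP2 : (cl (sigma ^ 2)).image Subtype.val = P2 := by decide

set_option maxRecDepth 1000000 in
set_option maxHeartbeats 4000000 in
lemma imgP4 : (cl tau).image Subtype.val = P4 := by decide

lemma mem_cl_iff_val {x : A5} {P : Finset (Equiv.Perm (Fin 5))}
    (h : (cl x).image Subtype.val = P) (a : A5) : (a ∈ cl x) = (a.val ∈ P) := by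
  subst h
  apply propext
  constructor
  · exact fun hh => Finset.mem_image_of_mem _ hh
  · intro hh
    rcases Finset.mem_image.1 hh with ⟨b, hb, hv⟩
    rwa [← Subtype.coe_injective hv]

lemma bridgeU : ∀ a : A5,
    (if (1:A5) = a then (49:ℤ) else 0) + 26 * (if a.val ∈ P1 then (1:ℤ) else 0)
      - 10 * (if a.val ∈ P2 then (1:ℤ) else 0) - 16 * (if a.val ∈ P4 then (1:ℤ) else 0)
      = W a.val := by decide

lemma bridgeV : ∀ a : A5,
    (if (1:A5) = a then (49:ℤ) else 0) + 26 * (if a.val ∈ P2 then (1:ℤ) else 0)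
      - 10 * (if a.val ∈ P1 then (1:ℤ) else 0) - 16 * (if a.val ∈ P4 then (1:ℤ) else 0)
      = W' a.val := by decide

lemma u_apply (a : A5) :
    ((49 : MonoidAlgebra ℤ A5) + 26 * classSum sigma - 10 * classSum (sigma ^ 2)
      - 16 * classSum tau).coeff a = W a.val := by
  rw [uexp_apply]
  simp only [mem_cl_iff_val imgP1 a, mem_cl_iff_val imgP2 a, mem_cl_iff_val imgP4 a]
  exact bridgeU a

lemma v_apply (a : A5) :
    ((49 : MonoidAlgebra ℤ A5) + 26 * classSum (sigma ^ 2) - 10 * classSum sigma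
      - 16 * classSum tau).coeff a = W' a.val := by
  rw [uexp_apply]
  simp only [mem_cl_iff_val imgP1 a, mem_cl_iff_val imgP2 a, mem_cl_iff_val imgP4 a]
  exact bridgeV a

set_option maxRecDepth 2000000 in
set_option maxHeartbeats 16000000 in
lemma keyDecide : ∀ x : A5,
    (∑ a : A5, W a.val * W' ((a⁻¹ * x).val)) = (if x = 1 then (1:ℤ) else 0) := by decide

lemma u_mul_v :
    ((49 : MonoidAlgebra ℤ A5) + 26 * classSum sigma - 10 * classSum (sigma ^ 2)
        - 16 * classSum tau) *
      ((49 : MonoidAlgebra ℤ A5) + 26 * classSum (sigma ^ 2) - 10 * classSum sigma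
        - 16 * classSum tau) = 1 := by
  set u := (49 : MonoidAlgebra ℤ A5) + 26 * classSum sigma - 10 * classSum (sigma ^ 2)
    - 16 * classSum tau with hu
  set v := (49 : MonoidAlgebra ℤ A5) + 26 * classSum (sigma ^ 2) - 10 * classSum sigma
    - 16 * classSum tau with hv
  ext x
  rw [MonoidAlgebra.mul_apply_left]
  rw [Finsupp.sum_fintype]
  case h => exact fun a => zero_mul _
  have : ∀ a : A5, u.coeff a * v.coeff (a⁻¹ * x) = W a.val * W' ((a⁻¹ * x).val) := fun a => by
    rw [u_apply, v_apply]
  rw [Finset.sum_congr rfl (fun a _ => this a), keyDecide x, MonoidAlgebra.one_def,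
    MonoidAlgebra.coeff_single, Finsupp.single_apply]
  by_cases h : x = 1
  · rw [if_pos h, if_pos h.symm]
  · rw [if_neg h, if_neg (fun hh => h hh.symm)]


/-- In `ℤ[A₅]`, the element `u = 49 + 26·C₁ − 10·C₂ − 16·C₄` is a central unit, where
`C₁` is the class sum of `(0 1 2 3 4)`, `C₂` that of its square (a 5-cycle of the other
class), and `C₄` that of the products of two disjoint transpositions. -/
theorem central_unit_int_A5 :
    IsUnit ((49 : MonoidAlgebra ℤ A5) + 26 * classSum sigma - 10 * classSum (sigma ^ 2)
        - 16 * classSum tau) ∧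
      ((49 : MonoidAlgebra ℤ A5) + 26 * classSum sigma - 10 * classSum (sigma ^ 2)
        - 16 * classSum tau) ∈ Subring.center (MonoidAlgebra ℤ A5) := by
  have hc := uexp_central sigma (sigma ^ 2) tau
  refine ⟨?_, hc⟩
  have hvu : ((49 : MonoidAlgebra ℤ A5) + 26 * classSum (sigma ^ 2) - 10 * classSum sigma
      - 16 * classSum tau) *
      ((49 : MonoidAlgebra ℤ A5) + 26 * classSum sigma - 10 * classSum (sigma ^ 2)
        - 16 * classSum tau) = 1 := by
    rw [Subring.mem_center_iff.1 hc _, u_mul_v]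
  exact ⟨⟨_, _, u_mul_v, hvu⟩, rfl⟩
end

section
/- Let G be a torsion-free group and K a field. If u is a central unit of the group algebra K[G] whose support is contained in the center of G and G satisfies the unique product property, then u is trivial, i.e. u = α·g for some α ∈ K^× and g ∈ Z(G). -/
/-- A monoid is torsion-free if no nontrivial element has finite order
(the meaning of Mathlib's former `Monoid.IsTorsionFree`). -/
def Monoid.IsTorsionFree (G : Type*) [Monoid G] : Prop :=
  ∀ g : G, g ≠ 1 → ¬IsOfFinOrder g

/-- Let `G` be a torsion-free group with the unique product property and `K` a field.
A central unit of `K[G]` whose support is contained in the center of `G` is trivial,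
i.e. of the form `α·g` with `α ∈ Kˣ` and `g ∈ Z(G)`. -/
theorem central_unit_trivial_of_uniqueProds
    (K : Type*) [Field K] (G : Type*) [Group G] [UniqueProds G]
    (htf : Monoid.IsTorsionFree G)
    (u : MonoidAlgebra K G) (hu : IsUnit u)
    (hc : u ∈ Subring.center (MonoidAlgebra K G))
    (hsupp : ∀ g ∈ u.coeff.support, g ∈ Subgroup.center G) :
    ∃ (α : Kˣ) (g : G), g ∈ Subgroup.center G ∧ u = MonoidAlgebra.single g (α : K) := by
  classical
  haveI : TwoUniqueProds G := UniqueProds.toTwoUniqueProds_of_group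
  obtain ⟨U, rfl⟩ := hu
  set u : MonoidAlgebra K G := (U : MonoidAlgebra K G) with hudef
  set v : MonoidAlgebra K G := ((U⁻¹ : (MonoidAlgebra K G)ˣ) : MonoidAlgebra K G) with hvdef
  have huv : u * v = 1 := U.mul_inv
  have hu0 : u ≠ 0 := U.ne_zero
  have hv0 : v ≠ 0 := (U⁻¹).ne_zero
  have hA : u.coeff.support.Nonempty := Finsupp.support_nonempty_iff.mpr (MonoidAlgebra.coeff_eq_zero.not.mpr hu0)
  have hB : v.coeff.support.Nonempty := Finsupp.support_nonempty_iff.mpr (MonoidAlgebra.coeff_eq_zero.not.mpr hv0)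
  -- key: the product of the support cardinalities is 1
  have hcard : ¬ (1 < u.coeff.support.card * v.coeff.support.card) := by
    intro hlt
    obtain ⟨p1, hp1, p2, hp2, hne, h1, h2⟩ :=
      TwoUniqueProds.uniqueMul_of_one_lt_card hlt
    rw [Finset.mem_product] at hp1 hp2
    have c1 : (u * v).coeff (p1.1 * p1.2) ≠ 0 := by
      rw [MonoidAlgebra.mul_apply_mul_eq_mul_of_uniqueMul h1]
      exact mul_ne_zero (Finsupp.mem_support_iff.mp hp1.1)
        (Finsupp.mem_support_iff.mp hp1.2)
    have c2 : (u * v).coeff (p2.1 * p2.2) ≠ 0 := by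
      rw [MonoidAlgebra.mul_apply_mul_eq_mul_of_uniqueMul h2]
      exact mul_ne_zero (Finsupp.mem_support_iff.mp hp2.1)
        (Finsupp.mem_support_iff.mp hp2.2)
    have e1 : p1.1 * p1.2 = 1 := by
      by_contra h
      rw [huv] at c1
      simp [MonoidAlgebra.one_def, MonoidAlgebra.single_apply, Ne.symm h] at c1
    have e2 : p2.1 * p2.2 = 1 := by
      by_contra h
      rw [huv] at c2
      simp [MonoidAlgebra.one_def, MonoidAlgebra.single_apply, Ne.symm h] at c2
    have := h1 hp2.1 hp2.2 (by rw [e2, e1])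
    exact hne (Prod.ext this.1.symm this.2.symm)
  have hA1 : u.coeff.support.card = 1 := by
    have h1 : 0 < u.coeff.support.card := Finset.card_pos.mpr hA
    have h2 : 0 < v.coeff.support.card := Finset.card_pos.mpr hB
    nlinarith [Nat.not_lt.mp hcard]
  obtain ⟨g, hg⟩ := Finset.card_eq_one.mp hA1
  have hgmem : g ∈ u.coeff.support := by rw [hg]; exact Finset.mem_singleton_self g
  have hug : u.coeff g ≠ 0 := Finsupp.mem_support_iff.mp hgmem
  refine ⟨Units.mk0 (u.coeff g) hug, g, hsupp g hgmem, ?_⟩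
  ext x
  rcases eq_or_ne x g with rfl | hx
  · simp [MonoidAlgebra.single_apply]
  · have : x ∉ u.coeff.support := by rw [hg]; simpa using hx
    rw [Finsupp.notMem_support_iff.mp this]
    simp [MonoidAlgebra.single_apply, hx.symm]
end
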